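/- Let W be an n×k matrix of rank k > 1 whose columns, together with span(X,Z), span a subspace on which all quantities below are defined; suppose σ_{y·zx} > 0, σ_{z·x} > 0, σ_{z·xw} > 0 (t_W² finite), and df + 1 − k > 0. Define F_W := [(σ²_{z·x} − σ²_{z·xw})/k] / [σ²_{z·xw}/(df + 1 − k)], t_W := √(k·df/(df + 1 − k) · F_W), and ρ²_{yw·zx} := 1 − σ²_{y·zxw}/σ²_{y·zx}. Then the Z-coefficients b̂ (regression of Y on (X,Z)) and β̂ (regression of Y on (X,Z,W)) satisfy |b̂ − β̂| ≤ SE(b̂) · t_W · |ρ_{yw·zx}|, equivalently (b̂ − β̂)² ≤ V̂(b̂) · [k·df/(df + 1 − k)] · F_W · ρ²_{yw·zx}. -/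

import Mathlib

open scoped BigOperators

/-- Weighted inner product on ℝⁿ: `(A,B) := (∑ i, wᵢ Aᵢ Bᵢ) / (∑ i, wᵢ)`. -/
noncomputable def wip {n : ℕ} (w A B : Fin n → ℝ) : ℝ :=
  (∑ i, w i * A i * B i) / (∑ i, w i)

/-- `P` is the best linear predictor (orthogonal projection with respect to the
weighted inner product `wip w`) of `A` onto the span of the collection `C`. -/
def IsBlp {n : ℕ} (w : Fin n → ℝ) (C : Set (Fin n → ℝ)) (A P : Fin n → ℝ) : Prop :=
  P ∈ Submodule.span ℝ C ∧ ∀ v ∈ Submodule.span ℝ C, wip w (A - P) v = 0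

section
variable {n : ℕ} (w : Fin n → ℝ)

lemma wip_comm (A B : Fin n → ℝ) : wip w A B = wip w B A := by
  unfold wip; congr 1; exact Finset.sum_congr rfl fun i _ => by ring

lemma wip_add_left (A B C : Fin n → ℝ) : wip w (A + B) C = wip w A C + wip w B C := by
  unfold wip
  rw [← add_div, ← Finset.sum_add_distrib]
  congr 1; exact Finset.sum_congr rfl fun i _ => by simp [Pi.add_apply]; ring

lemma wip_sub_left (A B C : Fin n → ℝ) : wip w (A - B) C = wip w A C - wip w B C := by
  unfold wip
  rw [← sub_div, ← Finset.sum_sub_distrib]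
  congr 1; exact Finset.sum_congr rfl fun i _ => by simp [Pi.sub_apply]; ring

lemma wip_smul_left (c : ℝ) (A B : Fin n → ℝ) : wip w (c • A) B = c * wip w A B := by
  unfold wip
  rw [← mul_div_assoc, Finset.mul_sum]
  congr 1; exact Finset.sum_congr rfl fun i _ => by simp [Pi.smul_apply]; ring

lemma wip_add_right (A B C : Fin n → ℝ) : wip w A (B + C) = wip w A B + wip w A C := by
  rw [wip_comm, wip_add_left, wip_comm w B, wip_comm w C]

lemma wip_sub_right (A B C : Fin n → ℝ) : wip w A (B - C) = wip w A B - wip w A C := by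
  rw [wip_comm, wip_sub_left, wip_comm w B, wip_comm w C]

lemma wip_smul_right (c : ℝ) (A B : Fin n → ℝ) : wip w A (c • B) = c * wip w A B := by
  rw [wip_comm, wip_smul_left, wip_comm]

lemma wip_self_nonneg (hw : ∀ i, 0 < w i) (A : Fin n → ℝ) : 0 ≤ wip w A A := by
  apply div_nonneg
  · exact Finset.sum_nonneg fun i _ => by nlinarith [(hw i).le, sq_nonneg (A i)]
  · exact Finset.sum_nonneg fun i _ => (hw i).le

lemma wip_cauchy (hw : ∀ i, 0 < w i) (A B : Fin n → ℝ) :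
    (wip w A B) ^ 2 ≤ wip w A A * wip w B B := by
  have key : (∑ i, w i * A i * B i) ^ 2
      ≤ (∑ i, w i * A i * A i) * (∑ i, w i * B i * B i) := by
    have h := Finset.sum_mul_sq_le_sq_mul_sq Finset.univ
      (fun i => Real.sqrt (w i) * A i) (fun i => Real.sqrt (w i) * B i)
    have e1 : ∀ i : Fin n, (Real.sqrt (w i) * A i) * (Real.sqrt (w i) * B i)
        = w i * A i * B i := fun i => by
      have := Real.mul_self_sqrt (hw i).le; linear_combination (A i * B i) * this
    have e2 : ∀ i : Fin n, (Real.sqrt (w i) * A i) ^ 2 = w i * A i * A i := fun i => by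
      have := Real.mul_self_sqrt (hw i).le; linear_combination (A i * A i) * this
    have e3 : ∀ i : Fin n, (Real.sqrt (w i) * B i) ^ 2 = w i * B i * B i := fun i => by
      have := Real.mul_self_sqrt (hw i).le; linear_combination (B i * B i) * this
    calc (∑ i, w i * A i * B i) ^ 2
        = (∑ i, (Real.sqrt (w i) * A i) * (Real.sqrt (w i) * B i)) ^ 2 := by
          rw [Finset.sum_congr rfl fun i _ => (e1 i).symm]
      _ ≤ (∑ i, (Real.sqrt (w i) * A i) ^ 2) * ∑ i, (Real.sqrt (w i) * B i) ^ 2 := h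
      _ = (∑ i, w i * A i * A i) * (∑ i, w i * B i * B i) := by
          rw [Finset.sum_congr rfl fun i _ => e2 i, Finset.sum_congr rfl fun i _ => e3 i]
  unfold wip
  rcases eq_or_lt_of_le (Finset.sum_nonneg fun i (_ : i ∈ Finset.univ) => (hw i).le) with hT | hT
  · rw [← hT]; simp
  · calc ((∑ i, w i * A i * B i) / ∑ i, w i) ^ 2
        = (∑ i, w i * A i * B i) ^ 2 / (∑ i, w i) ^ 2 := by rw [div_pow]
      _ ≤ ((∑ i, w i * A i * A i) * ∑ i, w i * B i * B i) / (∑ i, w i) ^ 2 := by gcongr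
      _ = ((∑ i, w i * A i * A i) / ∑ i, w i) * ((∑ i, w i * B i * B i) / ∑ i, w i) := by
          rw [div_mul_div_comm, ← sq]

end

/-- Corollary for multivariate `W`: for an `n×k` matrix `W` of rank
`k > 1` (columns `W 0, …, W (k−1)`, not collinear with `X`), if `σ_{y·zx} > 0`,
`σ_{z·x} > 0`, `σ_{z·xw} > 0` and `df + 1 − k > 0`, then with
`F_W := [(σ²_{z·x} − σ²_{z·xw})/k]/[σ²_{z·xw}/(df+1−k)]`,
`t_W := √(k·df/(df+1−k)·F_W)` and `ρ²_{yw·zx} := 1 − σ²_{y·zxw}/σ²_{y·zx}`,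
`|b̂ − β̂| ≤ SE(b̂)·t_W·|ρ_{yw·zx}|`, equivalently
`(b̂ − β̂)² ≤ V̂(b̂)·[k·df/(df+1−k)]·F_W·ρ²_{yw·zx}`. -/
theorem stmt9 {n k : ℕ} (hk : 1 < k) (w : Fin n → ℝ) (hw : ∀ i, 0 < w i)
    (X : Set (Fin n → ℝ)) (hXfin : X.Finite)
    (h1 : (fun _ => (1 : ℝ)) ∈ Submodule.span ℝ X)
    (Y Z : Fin n → ℝ) (W : Fin k → (Fin n → ℝ))
    (hWrank : LinearIndependent ℝ W)
    (hWX : Module.finrank ℝ (Submodule.span ℝ (X ∪ Set.range W))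
        = Module.finrank ℝ (Submodule.span ℝ X) + k)
    (Pzx Pzxw Pyzx Pyzxw : Fin n → ℝ)
    (hPzx : IsBlp w X Z Pzx)
    (hPzxw : IsBlp w (X ∪ Set.range W) Z Pzxw)
    (hPyzx : IsBlp w (insert Z X) Y Pyzx)
    (hPyzxw : IsBlp w (insert Z (X ∪ Set.range W)) Y Pyzxw)
    (bhat betahat : ℝ) (delta : Fin k → ℝ)
    (hb : Pyzx - bhat • Z ∈ Submodule.span ℝ X)
    (hbeta : Pyzxw - betahat • Z - (∑ i, delta i • W i) ∈ Submodule.span ℝ X)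
    (hσyzx : 0 < wip w (Y - Pyzx) (Y - Pyzx))
    (hσzx : 0 < wip w (Z - Pzx) (Z - Pzx))
    (hσzxw : 0 < wip w (Z - Pzxw) (Z - Pzxw))
    (hdfk : 0 < (n : ℝ) - (Module.finrank ℝ (Submodule.span ℝ X) : ℝ) - 1 + 1 - k) :
    let df : ℝ := (n : ℝ) - (Module.finrank ℝ (Submodule.span ℝ X) : ℝ) - 1
    let s2zx := wip w (Z - Pzx) (Z - Pzx)
    let s2zxw := wip w (Z - Pzxw) (Z - Pzxw)
    let FW := ((s2zx - s2zxw) / k) / (s2zxw / (df + 1 - k))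
    let tW := Real.sqrt (k * df / (df + 1 - k) * FW)
    let rho2 := 1 - wip w (Y - Pyzxw) (Y - Pyzxw) / wip w (Y - Pyzx) (Y - Pyzx)
    let SEb := Real.sqrt (wip w (Y - Pyzx) (Y - Pyzx)) / (Real.sqrt df * Real.sqrt s2zx)
    |bhat - betahat| ≤ SEb * tW * Real.sqrt rho2 ∧
    (bhat - betahat) ^ 2 ≤ SEb ^ 2 * (k * df / (df + 1 - k)) * FW * rho2 := by
  intro df s2zx s2zxw FW tW rho2 SEb
  -- basic positivity
  have hkR : (2 : ℝ) ≤ (k : ℝ) := by exact_mod_cast hk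
  have hk0 : (0 : ℝ) < (k : ℝ) := by linarith
  have hdf : 0 < df := by
    have : 0 < df + 1 - (k : ℝ) := hdfk
    linarith
  have hdfk' : (0 : ℝ) < df + 1 - k := hdfk
  -- span abbreviations
  have hX_XW : Submodule.span ℝ X ≤ Submodule.span ℝ (X ∪ Set.range W) :=
    Submodule.span_mono Set.subset_union_left
  have hX_ZX : Submodule.span ℝ X ≤ Submodule.span ℝ (insert Z X) :=
    Submodule.span_mono (Set.subset_insert _ _)
  have hZX_ZXW : Submodule.span ℝ (insert Z X)
      ≤ Submodule.span ℝ (insert Z (X ∪ Set.range W)) :=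
    Submodule.span_mono (Set.insert_subset_insert Set.subset_union_left)
  have hXW_ZXW : Submodule.span ℝ (X ∪ Set.range W)
      ≤ Submodule.span ℝ (insert Z (X ∪ Set.range W)) :=
    Submodule.span_mono (Set.subset_insert _ _)
  have hZ_ZX : Z ∈ Submodule.span ℝ (insert Z X) :=
    Submodule.subset_span (Set.mem_insert _ _)
  have hZ_ZXW : Z ∈ Submodule.span ℝ (insert Z (X ∪ Set.range W)) :=
    Submodule.subset_span (Set.mem_insert _ _)
  -- residual orthogonality (residual-first form)
  have oX : ∀ x ∈ Submodule.span ℝ X, wip w (Z - Pzx) x = 0 := hPzx.2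
  have oXW : ∀ x ∈ Submodule.span ℝ (X ∪ Set.range W), wip w (Z - Pzxw) x = 0 := hPzxw.2
  have oZX : ∀ x ∈ Submodule.span ℝ (insert Z X), wip w (Y - Pyzx) x = 0 := hPyzx.2
  have oZXW : ∀ x ∈ Submodule.span ℝ (insert Z (X ∪ Set.range W)),
      wip w (Y - Pyzxw) x = 0 := hPyzxw.2
  -- memberships of residuals/differences
  have hu_mem : Z - Pzx ∈ Submodule.span ℝ (insert Z X) :=
    sub_mem hZ_ZX (hX_ZX hPzx.1)
  have hu_mem' : Z - Pzx ∈ Submodule.span ℝ (insert Z (X ∪ Set.range W)) :=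
    hZX_ZXW hu_mem
  have hv_mem : Z - Pzxw ∈ Submodule.span ℝ (insert Z (X ∪ Set.range W)) :=
    sub_mem hZ_ZXW (hXW_ZXW hPzxw.1)
  have hd_mem : Pzxw - Pzx ∈ Submodule.span ℝ (X ∪ Set.range W) :=
    sub_mem hPzxw.1 (hX_XW hPzx.1)
  have hf_mem : Pyzxw - Pyzx ∈ Submodule.span ℝ (insert Z (X ∪ Set.range W)) :=
    sub_mem hPyzxw.1 (hZX_ZXW hPyzx.1)
  have hs_mem : (∑ i, delta i • W i) ∈ Submodule.span ℝ (X ∪ Set.range W) :=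
    Submodule.sum_mem _ fun i _ => Submodule.smul_mem _ _
      (Submodule.subset_span (Set.mem_union_right _ ⟨i, rfl⟩))
  -- scalar abbreviations
  set a := wip w (Z - Pzx) (Z - Pzx) with ha_def
  set b := wip w (Z - Pzxw) (Z - Pzxw) with hb_def
  set c := wip w (Y - Pyzx) (Y - Pyzx) with hc_def
  set rr := wip w (Y - Pyzxw) (Y - Pyzxw) with hrr_def
  set F := wip w (Pyzxw - Pyzx) (Pyzxw - Pyzx) with hF_def
  have ha : 0 < a := hσzx
  have hbpos : 0 < b := hσzxw
  have hc : 0 < c := hσyzx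
  have hF0 : 0 ≤ F := wip_self_nonneg w hw _
  -- (1) wip u v = b
  have huv : wip w (Z - Pzx) (Z - Pzxw) = b := by
    have h0 : wip w (Z - Pzxw) (Pzxw - Pzx) = 0 := oXW _ hd_mem
    have hsplit : wip w (Z - Pzx) (Z - Pzxw)
        = wip w (Z - Pzxw) (Z - Pzxw) + wip w (Pzxw - Pzx) (Z - Pzxw) := by
      have : (Z - Pzx : Fin n → ℝ) = (Z - Pzxw) + (Pzxw - Pzx) := by abel
      rw [this, wip_add_left]
    rw [hsplit, wip_comm w (Pzxw - Pzx), h0, add_zero]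
  -- (2) a = b + wip d d, hence b ≤ a
  have hab : a = b + wip w (Pzxw - Pzx) (Pzxw - Pzx) := by
    have h0 : wip w (Z - Pzxw) (Pzxw - Pzx) = 0 := oXW _ hd_mem
    have : (Z - Pzx : Fin n → ℝ) = (Z - Pzxw) + (Pzxw - Pzx) := by abel
    rw [ha_def, this, wip_add_left, wip_add_right, wip_add_right, h0,
      wip_comm w (Pzxw - Pzx) (Z - Pzxw), h0]
    ring
  have hba : b ≤ a := by
    have := wip_self_nonneg w hw (Pzxw - Pzx)
    linarith [hab]
  -- (3) c = rr + F  (Pythagoras for Y)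
  have hcrF : c = rr + F := by
    have h0 : wip w (Y - Pyzxw) (Pyzxw - Pyzx) = 0 := oZXW _ hf_mem
    have : (Y - Pyzx : Fin n → ℝ) = (Y - Pyzxw) + (Pyzxw - Pyzx) := by abel
    rw [hc_def, this, wip_add_left, wip_add_right, wip_add_right, h0,
      wip_comm w (Pyzxw - Pyzx) (Y - Pyzxw), h0]
    ring
  have hrr0 : 0 ≤ rr := wip_self_nonneg w hw _
  have ha' : a ≠ 0 := ne_of_gt ha
  have hb' : b ≠ 0 := ne_of_gt hbpos
  have hc' : c ≠ 0 := ne_of_gt hc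
  -- ip Z u = a, ip Z v = b
  have hZu' : wip w (Z - Pzx) Z = a := by
    have h2 := wip_sub_right w (Z - Pzx) Z Pzx
    have h0 : wip w (Z - Pzx) Pzx = 0 := oX _ hPzx.1
    rw [ha_def]; linarith
  have hZu : wip w Z (Z - Pzx) = a := by rw [wip_comm]; exact hZu'
  have hZv' : wip w (Z - Pzxw) Z = b := by
    have h2 := wip_sub_right w (Z - Pzxw) Z Pzxw
    have h0 : wip w (Z - Pzxw) Pzxw = 0 := oXW _ hPzxw.1
    rw [hb_def]; linarith
  have hZv : wip w Z (Z - Pzxw) = b := by rw [wip_comm]; exact hZv'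
  -- (4) ip Y u = bhat * a
  have hYu : wip w Y (Z - Pzx) = bhat * a := by
    have hdecomp : (Y : Fin n → ℝ)
        = (Y - Pyzx) + (Pyzx - bhat • Z) + bhat • Z := by abel
    have h1' : wip w (Y - Pyzx) (Z - Pzx) = 0 := oZX _ hu_mem
    have h2' : wip w (Pyzx - bhat • Z) (Z - Pzx) = 0 := by
      rw [wip_comm]; exact oX _ hb
    rw [hdecomp, wip_add_left, wip_add_left, h1', h2', wip_smul_left, wip_comm w Z, hZu']
    ring
  -- (5) ip Y v = betahat * b
  have hYv : wip w Y (Z - Pzxw) = betahat * b := by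
    have hdecomp : (Y : Fin n → ℝ)
        = (Y - Pyzxw) + (Pyzxw - betahat • Z - (∑ i, delta i • W i))
          + betahat • Z + (∑ i, delta i • W i) := by abel
    have h1' : wip w (Y - Pyzxw) (Z - Pzxw) = 0 := oZXW _ hv_mem
    have h2' : wip w (Pyzxw - betahat • Z - (∑ i, delta i • W i)) (Z - Pzxw) = 0 := by
      rw [wip_comm]; exact oXW _ (hX_XW hbeta)
    have h3' : wip w (∑ i, delta i • W i) (Z - Pzxw) = 0 := by
      rw [wip_comm]; exact oXW _ hs_mem
    rw [hdecomp, wip_add_left, wip_add_left, wip_add_left, h1', h2', h3',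
      wip_smul_left, wip_comm w Z, hZv']
    ring
  -- the contrast vector q
  set q : Fin n → ℝ := a⁻¹ • (Z - Pzx) - b⁻¹ • (Z - Pzxw) with hq_def
  have hq_mem : q ∈ Submodule.span ℝ (insert Z (X ∪ Set.range W)) :=
    sub_mem (Submodule.smul_mem _ _ hu_mem') (Submodule.smul_mem _ _ hv_mem)
  -- ip f q = bhat - betahat
  have hfq : wip w (Pyzxw - Pyzx) q = bhat - betahat := by
    -- first: ip Y q = bhat - betahat
    have hYq : wip w Y q = bhat - betahat := by
      rw [hq_def, wip_sub_right, wip_smul_right, wip_smul_right, hYu, hYv]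
      field_simp
    -- ip (Y - Pyzxw) q = 0
    have hrq : wip w (Y - Pyzxw) q = 0 := oZXW _ hq_mem
    -- ip Pyzx q = 0
    have hgq : wip w (Pyzx - bhat • Z) q = 0 := by
      rw [hq_def, wip_sub_right, wip_smul_right, wip_smul_right]
      have e1 : wip w (Pyzx - bhat • Z) (Z - Pzx) = 0 := by
        rw [wip_comm]; exact oX _ hb
      have e2 : wip w (Pyzx - bhat • Z) (Z - Pzxw) = 0 := by
        rw [wip_comm]; exact oXW _ (hX_XW hb)
      rw [e1, e2]; ring
    have hZq : wip w Z q = 0 := by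
      rw [hq_def, wip_sub_right, wip_smul_right, wip_smul_right, hZu, hZv]
      field_simp; ring
    have hPyzxq : wip w Pyzx q = 0 := by
      have : (Pyzx : Fin n → ℝ) = (Pyzx - bhat • Z) + bhat • Z := by abel
      rw [this, wip_add_left, hgq, wip_smul_left, hZq]
      ring
    have hdecomp : (Pyzxw - Pyzx : Fin n → ℝ) = Y - (Y - Pyzxw) - Pyzx := by abel
    rw [hdecomp, wip_sub_left, wip_sub_left, hYq, hrq, hPyzxq]
    ring
  -- ip q q = b⁻¹ - a⁻¹
  have hvu : wip w (Z - Pzxw) (Z - Pzx) = b := by rw [wip_comm]; exact huv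
  have huq : wip w (Z - Pzx) q = 0 := by
    rw [hq_def, wip_sub_right, wip_smul_right, wip_smul_right, ← ha_def, huv]
    field_simp; ring
  have hvq : wip w (Z - Pzxw) q = a⁻¹ * b - 1 := by
    rw [hq_def, wip_sub_right, wip_smul_right, wip_smul_right, hvu, ← hb_def]
    field_simp
  have hqq : wip w q q = b⁻¹ - a⁻¹ := by
    nth_rewrite 2 [hq_def]
    rw [wip_sub_right, wip_smul_right, wip_smul_right,
      show wip w q (Z - Pzx) = 0 by rw [wip_comm]; exact huq,
      show wip w q (Z - Pzxw) = a⁻¹ * b - 1 by rw [wip_comm]; exact hvq]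
    field_simp; ring
  -- Cauchy–Schwarz
  have key : (bhat - betahat) ^ 2 ≤ F * (b⁻¹ - a⁻¹) := by
    have := wip_cauchy w hw (Pyzxw - Pyzx) q
    rw [hfq, hqq, ← hF_def] at this
    exact this
  -- arithmetic facts
  have hsz : s2zx = a := rfl
  have hszw : s2zxw = b := rfl
  have hrho : rho2 = F / c := by
    show 1 - rr / c = F / c
    field_simp
    linarith [hcrF]
  have hrho0 : 0 ≤ rho2 := by rw [hrho]; positivity
  have hFW : FW = ((a - b) / k) / (b / (df + 1 - k)) := rfl
  have hFW0 : 0 ≤ FW := by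
    rw [hFW]
    apply div_nonneg (div_nonneg (by linarith) hk0.le)
    positivity
  have hSEb2 : SEb ^ 2 = c / (df * a) := by
    show (Real.sqrt c / (Real.sqrt df * Real.sqrt a)) ^ 2 = c / (df * a)
    rw [div_pow, mul_pow, Real.sq_sqrt hc.le, Real.sq_sqrt hdf.le, Real.sq_sqrt ha.le]
  -- the second (squared) inequality
  have hRHS : SEb ^ 2 * ((k : ℝ) * df / (df + 1 - k)) * FW * rho2 = F * (b⁻¹ - a⁻¹) := by
    rw [hSEb2, hFW, hrho]
    field_simp
  have goal2 : (bhat - betahat) ^ 2 ≤ SEb ^ 2 * ((k : ℝ) * df / (df + 1 - k)) * FW * rho2 := by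
    rw [hRHS]; exact key
  refine ⟨?_, goal2⟩
  -- the first inequality
  have hSEb0 : 0 ≤ SEb := by
    show 0 ≤ Real.sqrt c / (Real.sqrt df * Real.sqrt a)
    positivity
  have htW0 : 0 ≤ tW := Real.sqrt_nonneg _
  have harg0 : 0 ≤ (k : ℝ) * df / (df + 1 - k) * FW := by positivity
  have hRHS1 : (SEb * tW * Real.sqrt rho2) ^ 2
      = SEb ^ 2 * ((k : ℝ) * df / (df + 1 - k)) * FW * rho2 := by
    have htW2 : tW ^ 2 = (k : ℝ) * df / (df + 1 - k) * FW := Real.sq_sqrt harg0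
    have hr2 : Real.sqrt rho2 ^ 2 = rho2 := Real.sq_sqrt hrho0
    rw [mul_pow, mul_pow, htW2, hr2]
    ring
  have hsq : (bhat - betahat) ^ 2 ≤ (SEb * tW * Real.sqrt rho2) ^ 2 := by
    rw [hRHS1]; exact goal2
  have := Real.sqrt_le_sqrt hsq
  rwa [Real.sqrt_sq_eq_abs, Real.sqrt_sq (by positivity)] at this
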